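/- (Cartlidge.) Fix 1 < p < ∞. Let (λ_k)_{k≥1} satisfy λ_k > 0 for all k, set Λ_n = ∑_{k=1}^n λ_k, and suppose L = sup_{n≥1} (Λ_{n+1}/λ_{n+1} − Λ_n/λ_n) satisfies L < p. Then for every complex (or real) sequence (b_n) with ∑_{n=1}^∞ |b_n|^p < ∞, one has ∑_{n=1}^∞ |∑_{k=1}^n λ_k b_k / Λ_n|^p ≤ (p/(p−L))^p · ∑_{n=1}^∞ |b_n|^p. -/

import Mathlib

lemma young_aux {p : ℝ} (hp : 1 < p) {a b : ℝ} (ha : 0 ≤ a) (hb : 0 ≤ b) :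
    p * (a * b ^ (p - 1)) ≤ a ^ p + (p - 1) * b ^ p := by
  have hpq : p.HolderConjugate (p / (p - 1)) :=
    Real.HolderConjugate.conjExponent hp
  have h := Real.young_inequality_of_nonneg ha (Real.rpow_nonneg hb (p - 1)) hpq
  have h2 : (b ^ (p - 1)) ^ (p / (p - 1)) = b ^ p := by
    rw [← Real.rpow_mul hb]
    congr 1
    have h1 : p - 1 ≠ 0 := by intro h; linarith [h]
    field_simp [h1]
  rw [h2] at h
  have hp0 : (0:ℝ) < p := by linarith
  have hp1 : (0:ℝ) < p - 1 := by linarith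
  have hq : b ^ p / (p / (p - 1)) = (p - 1) / p * b ^ p := by
    field_simp
  rw [hq] at h
  have := mul_le_mul_of_nonneg_left h hp0.le
  calc p * (a * b ^ (p - 1)) ≤ p * (a ^ p / p + (p - 1) / p * b ^ p) := this
    _ = a ^ p + (p - 1) * b ^ p := by field_simp

lemma tangent_aux {p : ℝ} (hp : 1 < p) {s r : ℝ} (hs : 0 ≤ s) (hr : 0 ≤ r) :
    r ^ p + p * r ^ (p - 1) * (s - r) ≤ s ^ p := by
  have h := young_aux hp hs hr
  have hrr : r ^ (p - 1) * r = r ^ p := by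
    rcases eq_or_lt_of_le hr with h0 | h0
    · rw [← h0, Real.zero_rpow (by linarith : p - 1 ≠ 0),
        Real.zero_rpow (by linarith : p ≠ 0)]
      ring
    · rw [← Real.rpow_add_one (ne_of_gt h0)]
      norm_num
  nlinarith [h, hrr]

theorem cartlidge (p : ℝ) (hp : 1 < p)
    (lam : ℕ → ℝ) (hlam : ∀ k ≥ 1, 0 < lam k)
    (Lam : ℕ → ℝ) (hLam : ∀ n, Lam n = ∑ k ∈ Finset.Icc 1 n, lam k)
    (L : ℝ)
    (hL : IsLUB {x : ℝ | ∃ n ≥ 1,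
        x = Lam (n + 1) / lam (n + 1) - Lam n / lam n} L)
    (hLp : L < p)
    (b : ℕ → ℝ) (hb : Summable (fun n : ℕ => |b (n + 1)| ^ p)) :
    ∑' n : ℕ, |∑ k ∈ Finset.Icc 1 (n + 1), lam k * b k / Lam (n + 1)| ^ p ≤
      (p / (p - L)) ^ p * ∑' n : ℕ, |b (n + 1)| ^ p := by
  have hp0 : (0:ℝ) < p := by linarith
  set c : ℝ := p / (p - L) with hc_def
  have hpL : 0 < p - L := by linarith
  have hc : 0 < c := div_pos hp0 hpL
  have hcpL : c * (p - L) = p := div_mul_cancel₀ p (ne_of_gt hpL)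
  -- basic facts about Lam
  have hLam0 : Lam 0 = 0 := by rw [hLam]; simp
  have hLamsucc : ∀ n : ℕ, Lam (n + 1) = Lam n + lam (n + 1) := by
    intro n
    rw [hLam, hLam, Finset.sum_Icc_succ_top (Nat.le_add_left 1 n)]
  have hLamnn : ∀ n : ℕ, 0 ≤ Lam n := by
    intro n
    rw [hLam]
    apply Finset.sum_nonneg
    intro k hk
    exact (hlam k (Finset.mem_Icc.mp hk).1).le
  have hLampos : ∀ n : ℕ, 0 < Lam (n + 1) := by
    intro n
    rw [hLamsucc n]
    have := hlam (n + 1) (Nat.le_add_left 1 n)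
    linarith [hLamnn n]
  -- S, x, t, g
  set S : ℕ → ℝ := fun n => ∑ k ∈ Finset.Icc 1 n, lam k * b k with hS_def
  set x : ℕ → ℝ := fun n => |S n / Lam n| with hx_def
  have hx0 : x 0 = 0 := by simp [hx_def, hS_def, hLam0]
  have hxnn : ∀ n, 0 ≤ x n := fun n => abs_nonneg _
  have hSsucc : ∀ n : ℕ, S (n + 1) = S n + lam (n + 1) * b (n + 1) := by
    intro n
    rw [hS_def]
    exact Finset.sum_Icc_succ_top (Nat.le_add_left 1 n) _
  have hSx : ∀ n : ℕ, |S n| = Lam n * x n := by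
    intro n
    cases n with
    | zero => simp [hx_def, hS_def, hLam0]
    | succ m =>
      rw [hx_def]
      simp only
      rw [abs_div, abs_of_pos (hLampos m), mul_div_cancel₀ _ (ne_of_gt (hLampos m))]
  set t : ℕ → ℝ := fun n => Lam n / lam n with ht_def
  have ht1 : ∀ n : ℕ, 1 ≤ t (n + 1) := by
    intro n
    rw [ht_def]
    simp only
    rw [le_div_iff₀ (hlam (n + 1) (Nat.le_add_left 1 n)), one_mul, hLamsucc n]
    linarith [hLamnn n]
  set g : ℕ → ℝ := fun n => c * (t (n + 1) - 1) * x n ^ p with hg_def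
  have hg0 : g 0 = 0 := by
    rw [hg_def]
    simp only [hx0]
    rw [Real.zero_rpow (ne_of_gt hp0)]
    ring
  have hgnn : ∀ n : ℕ, 0 ≤ g n := by
    intro n
    apply mul_nonneg (mul_nonneg hc.le _) (Real.rpow_nonneg (hxnn n) p)
    cases n with
    | zero =>
      have : t 1 = 1 := by
        rw [ht_def]; simp only
        rw [hLamsucc 0, hLam0, zero_add, div_self (ne_of_gt (hlam 1 le_rfl))]
      rw [this]; norm_num
    | succ m => linarith [ht1 (m + 1)]
  -- key inequality from triangle inequality
  have key : ∀ m : ℕ, Lam (m + 1) * x (m + 1) - Lam m * x m ≤ lam (m + 1) * |b (m + 1)| := by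
    intro m
    have h1 : lam (m + 1) * |b (m + 1)| = |S (m + 1) - S m| := by
      rw [hSsucc m, add_sub_cancel_left, abs_mul,
        abs_of_pos (hlam (m + 1) (Nat.le_add_left 1 m))]
    rw [h1, ← hSx, ← hSx]
    exact abs_sub_abs_le_abs_sub _ _
  -- supremum bound
  have hΔ : ∀ n : ℕ, t (n + 2) - t (n + 1) ≤ L := by
    intro n
    apply hL.1
    exact ⟨n + 1, Nat.le_add_left 1 n, rfl⟩
  -- main pointwise inequality
  have main : ∀ m : ℕ, g (m + 1) - g m ≤ c ^ p * |b (m + 1)| ^ p - x (m + 1) ^ p := by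
    intro m
    have hl := hlam (m + 1) (Nat.le_add_left 1 m)
    have hD : (0:ℝ) ≤ |b (m + 1)| := abs_nonneg _
    have hT1 : 1 ≤ t (m + 1) := ht1 m
    -- divide the key inequality by lam (m+1)
    have hlT : lam (m + 1) * t (m + 1) = Lam (m + 1) := by
      rw [ht_def]
      field_simp
    have hLm : Lam m = lam (m + 1) * (t (m + 1) - 1) := by
      rw [mul_sub, hlT, mul_one]
      linarith [hLamsucc m]
    have hTX : t (m + 1) * x (m + 1) - (t (m + 1) - 1) * x m ≤ |b (m + 1)| := by
      have hcalc : lam (m + 1) * (t (m + 1) * x (m + 1) - (t (m + 1) - 1) * x m)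
          ≤ lam (m + 1) * |b (m + 1)| := by
        calc lam (m + 1) * (t (m + 1) * x (m + 1) - (t (m + 1) - 1) * x m)
            = (lam (m + 1) * t (m + 1)) * x (m + 1)
              - (lam (m + 1) * (t (m + 1) - 1)) * x m := by ring
          _ = Lam (m + 1) * x (m + 1) - Lam m * x m := by rw [hlT, ← hLm]
          _ ≤ lam (m + 1) * |b (m + 1)| := key m
      exact le_of_mul_le_mul_left hcalc hl
    simp only [hg_def]
    rcases eq_or_lt_of_le (hxnn (m + 1)) with h0 | h0
    · rw [← h0, Real.zero_rpow (ne_of_gt hp0)]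
      have h1 : 0 ≤ c ^ p * |b (m + 1)| ^ p :=
        mul_nonneg (Real.rpow_nonneg hc.le p) (Real.rpow_nonneg hD p)
      have h2 : 0 ≤ c * (t (m + 1) - 1) * x m ^ p :=
        mul_nonneg (mul_nonneg hc.le (by linarith)) (Real.rpow_nonneg (hxnn m) p)
      nlinarith [h1, h2]
    · -- x (m+1) > 0
      have htan := tangent_aux hp (mul_nonneg hc.le hD) (hxnn (m + 1))
      rw [Real.mul_rpow hc.le hD] at htan
      have hE : 0 ≤ x (m + 1) ^ (p - 1) := Real.rpow_nonneg (hxnn (m + 1)) _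
      have hEX : x (m + 1) ^ (p - 1) * x (m + 1) = x (m + 1) ^ p := by
        rw [← Real.rpow_add_one (ne_of_gt h0)]
        norm_num
      have hyoung := young_aux hp (hxnn m) (hxnn (m + 1))
      have step3 : p * x (m + 1) ^ (p - 1) *
            (c * (t (m + 1) * x (m + 1) - (t (m + 1) - 1) * x m) - x (m + 1))
          ≤ p * x (m + 1) ^ (p - 1) * (c * |b (m + 1)| - x (m + 1)) := by
        apply mul_le_mul_of_nonneg_left _ (mul_nonneg hp0.le hE)
        have := mul_le_mul_of_nonneg_left hTX hc.le
        linarith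
      have step1 : x (m + 1) ^ p + p * x (m + 1) ^ (p - 1) *
            (c * (t (m + 1) * x (m + 1) - (t (m + 1) - 1) * x m) - x (m + 1))
          ≤ c ^ p * |b (m + 1)| ^ p := le_trans (by linarith) htan
      have expand : x (m + 1) ^ p + p * x (m + 1) ^ (p - 1) *
            (c * (t (m + 1) * x (m + 1) - (t (m + 1) - 1) * x m) - x (m + 1))
          = x (m + 1) ^ p + p * c * t (m + 1) * x (m + 1) ^ p
            - c * (t (m + 1) - 1) * (p * (x m * x (m + 1) ^ (p - 1)))
            + (c * (t (m + 1) - 1) - 1) * (p * x (m + 1) ^ p)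
            - c * (t (m + 1) - 1) * (p * x (m + 1) ^ p) := by
        rw [← hEX]
        ring
      rw [expand] at step1
      have hcT : 0 ≤ c * (t (m + 1) - 1) := mul_nonneg hc.le (by linarith)
      have step4 : c * (t (m + 1) - 1) * (p * (x m * x (m + 1) ^ (p - 1)))
          ≤ c * (t (m + 1) - 1) * (x m ^ p + (p - 1) * x (m + 1) ^ p) :=
        mul_le_mul_of_nonneg_left hyoung hcT
      have step6 : p ≤ c * (p - (t (m + 2) - t (m + 1))) := by
        have h1 : p - L ≤ p - (t (m + 2) - t (m + 1)) := by linarith [hΔ m]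
        nlinarith [mul_le_mul_of_nonneg_left h1 hc.le]
      have step7 : p * x (m + 1) ^ p
          ≤ c * (p - (t (m + 2) - t (m + 1))) * x (m + 1) ^ p :=
        mul_le_mul_of_nonneg_right step6 (Real.rpow_nonneg (hxnn (m + 1)) p)
      linarith [step1, step4, step7]
  -- partial sums
  have hpartial : ∀ N : ℕ, ∑ n ∈ Finset.range N, x (n + 1) ^ p ≤
      c ^ p * ∑ n ∈ Finset.range N, |b (n + 1)| ^ p := by
    intro N
    have htel : ∑ n ∈ Finset.range N, (g (n + 1) - g n) = g N - g 0 :=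
      Finset.sum_range_sub g N
    have hsum : g N - g 0 ≤ ∑ n ∈ Finset.range N, (c ^ p * |b (n + 1)| ^ p - x (n + 1) ^ p) := by
      rw [← htel]
      exact Finset.sum_le_sum fun n _ => main n
    rw [Finset.sum_sub_distrib, ← Finset.mul_sum] at hsum
    rw [hg0] at hsum
    linarith [hgnn N]
  -- conclude
  have hbnn : ∀ n : ℕ, 0 ≤ |b (n + 1)| ^ p := fun n => Real.rpow_nonneg (abs_nonneg _) p
  have hbound : ∀ N : ℕ, ∑ n ∈ Finset.range N, x (n + 1) ^ p ≤
      c ^ p * ∑' n : ℕ, |b (n + 1)| ^ p := by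
    intro N
    refine le_trans (hpartial N) ?_
    apply mul_le_mul_of_nonneg_left _ (Real.rpow_nonneg hc.le p)
    exact Summable.sum_le_tsum _ (fun n _ => hbnn n) hb
  have hfinal : ∑' n : ℕ, x (n + 1) ^ p ≤ c ^ p * ∑' n : ℕ, |b (n + 1)| ^ p :=
    Real.tsum_le_of_sum_range_le (fun n => Real.rpow_nonneg (hxnn _) p) hbound
  have heq : ∀ n : ℕ, |∑ k ∈ Finset.Icc 1 (n + 1), lam k * b k / Lam (n + 1)| ^ p
      = x (n + 1) ^ p := by
    intro n
    congr 1
    rw [hx_def]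
    simp only
    rw [hS_def]
    simp only
    rw [← Finset.sum_div]
  calc ∑' n : ℕ, |∑ k ∈ Finset.Icc 1 (n + 1), lam k * b k / Lam (n + 1)| ^ p
      = ∑' n : ℕ, x (n + 1) ^ p := by rw [tsum_congr heq]
    _ ≤ c ^ p * ∑' n : ℕ, |b (n + 1)| ^ p := hfinal
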